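/- Let v: [0,∞) → ℝ be a locally Lipschitz function, N ≥ 0 and γ > 0, and suppose that for almost every t with v(t) > N one has v'(t) ≤ −γ√(v(t) − N). Then for all t ≥ τ := 2√(max(v(0) − N, 0))/γ, one has v(t) ≤ N; moreover the set {v ≤ N} is forward invariant: if v(s) ≤ N then v(t) ≤ N for all t ≥ s. -/

import Mathlib

open MeasureTheory Set Filter

private lemma lipOn_weaken {f : ℝ → ℝ} {s : Set ℝ} {K K' : NNReal}
    (h : LipschitzOnWith K f s) (hKK : K ≤ K') : LipschitzOnWith K' f s :=
  fun x hx y hy => (h hx hy).trans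
    (mul_le_mul_of_nonneg_right (ENNReal.coe_le_coe.2 hKK) zero_le)

private lemma lip_glue {f : ℝ → ℝ} {K : NNReal} {a x y : ℝ}
    (h1 : LipschitzOnWith K f (Set.Icc a x)) (h2 : LipschitzOnWith K f (Set.Icc x y))
    (hax : a ≤ x) (hxy : x ≤ y) : LipschitzOnWith K f (Set.Icc a y) := by
  rw [lipschitzOnWith_iff_dist_le_mul] at h1 h2 ⊢
  have key : ∀ p ∈ Set.Icc a y, ∀ q ∈ Set.Icc a y, p ≤ q → dist (f p) (f q) ≤ K * dist p q := by
    intro p hp q hq hpq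
    rcases le_total q x with hqx | hqx
    · exact h1 p ⟨hp.1, hpq.trans hqx⟩ q ⟨hq.1, hqx⟩
    · rcases le_total p x with hpx | hpx
      · have d1 := h1 p ⟨hp.1, hpx⟩ x ⟨hax, le_rfl⟩
        have d2 := h2 x ⟨le_rfl, hxy⟩ q ⟨hqx, hq.2⟩
        calc dist (f p) (f q) ≤ dist (f p) (f x) + dist (f x) (f q) := dist_triangle _ _ _
          _ ≤ K * dist p x + K * dist x q := add_le_add d1 d2
          _ = K * (dist p x + dist x q) := by ring
          _ = K * dist p q := by
              rw [Real.dist_eq, Real.dist_eq, Real.dist_eq,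
                abs_of_nonpos (by linarith), abs_of_nonpos (by linarith),
                abs_of_nonpos (by linarith)]
              ring
      · exact h2 p ⟨hpx, hp.2⟩ q ⟨hpx.trans hpq, hq.2⟩
  intro p hp q hq
  rcases le_total p q with hpq | hpq
  · exact key p hp q hq hpq
  · rw [dist_comm, dist_comm p q]
    exact key q hq p hp hpq

private lemma loclip_icc {f : ℝ → ℝ} (hf : LocallyLipschitz f) (a b : ℝ) (hab : a ≤ b) :
    ∃ K : NNReal, LipschitzOnWith K f (Set.Icc a b) := by
  set A : Set ℝ := {x | x ∈ Set.Icc a b ∧ ∃ K : NNReal, LipschitzOnWith K f (Set.Icc a x)} with hA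
  have ha : a ∈ A := by
    refine ⟨⟨le_rfl, hab⟩, 0, ?_⟩
    rw [lipschitzOnWith_iff_dist_le_mul]
    intro p hp q hq
    have : p = q := by
      have := hp.1; have := hp.2; have := hq.1; have := hq.2; linarith
    simp [this]
  have hne : A.Nonempty := ⟨a, ha⟩
  have hbdd : BddAbove A := ⟨b, fun x hx => hx.1.2⟩
  set c := sSup A with hc
  have hac : a ≤ c := le_csSup hbdd ha
  have hcb : c ≤ b := csSup_le hne fun x hx => hx.1.2
  obtain ⟨K, t, ht, hK⟩ := hf c
  obtain ⟨δ, hδpos, hδ⟩ : ∃ δ > 0, Metric.closedBall c δ ⊆ t :=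
    Metric.nhds_basis_closedBall.mem_iff.1 ht
  have hball : Set.Icc (c - δ) (c + δ) ⊆ t := by
    rwa [← Real.closedBall_eq_Icc]
  obtain ⟨x, hxA, hx⟩ : ∃ x ∈ A, c - δ < x := exists_lt_of_lt_csSup hne (by linarith)
  obtain ⟨K₁, hK₁⟩ := hxA.2
  have hxc : x ≤ c := le_csSup hbdd hxA
  set y := min (c + δ) b with hy
  have hcy : c ≤ y := le_min (by linarith) hcb
  have hxy : x ≤ y := hxc.trans hcy
  have h2 : LipschitzOnWith (K₁ ⊔ K) f (Set.Icc x y) := by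
    refine lipOn_weaken (hK.mono (Set.Subset.trans ?_ hball)) le_sup_right
    exact Set.Icc_subset_Icc hx.le (min_le_left _ _)
  have hyA : y ∈ A :=
    ⟨⟨hac.trans hcy, min_le_right _ _⟩, K₁ ⊔ K,
      lip_glue (lipOn_weaken hK₁ le_sup_left) h2 hxA.1.1 hxy⟩
  have hyc : y ≤ c := le_csSup hbdd hyA
  have hcb' : c = b := by
    by_contra h
    have h1 : c < b := lt_of_le_of_ne hcb h
    have h2 : c < y := lt_min (by linarith) h1
    linarith
  have hyb : y = b := by
    rw [hy, hcb']
    exact min_eq_right (by linarith)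
  obtain ⟨K', hK'⟩ := hyA.2
  exact ⟨K', by rwa [hyb] at hK'⟩

private lemma sqrt_max_lip {c : ℝ} (hc : 0 < c) :
    LipschitzWith (Real.toNNReal (1 / (2 * Real.sqrt c))) (fun y => Real.sqrt (max y c)) := by
  have hs : 0 < Real.sqrt c := Real.sqrt_pos.2 hc
  have key : ∀ y z : ℝ, Real.sqrt (max y c) - Real.sqrt (max z c) ≤ |y - z| / (2 * Real.sqrt c) := by
    intro y z
    set u := max z c with hu
    set w := max y c with hw
    rcases le_total w u with hle | hle
    · have : Real.sqrt w ≤ Real.sqrt u := Real.sqrt_le_sqrt hle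
      have : Real.sqrt w - Real.sqrt u ≤ 0 := by linarith
      exact this.trans (div_nonneg (abs_nonneg _) (by positivity))
    · have hcu : c ≤ u := le_max_right _ _
      have hcw : c ≤ w := le_max_right _ _
      have hsu : Real.sqrt c ≤ Real.sqrt u := Real.sqrt_le_sqrt hcu
      have hsw : Real.sqrt c ≤ Real.sqrt w := Real.sqrt_le_sqrt hcw
      have hnn : 0 ≤ Real.sqrt w - Real.sqrt u := by
        have := Real.sqrt_le_sqrt hle; linarith
      have hprod : (Real.sqrt w - Real.sqrt u) * (Real.sqrt w + Real.sqrt u) = w - u := by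
        have h1 : Real.sqrt w ^ 2 = w := Real.sq_sqrt ((hc.le.trans hcw))
        have h2 : Real.sqrt u ^ 2 = u := Real.sq_sqrt ((hc.le.trans hcu))
        nlinarith
      have hstep : (Real.sqrt w - Real.sqrt u) * (2 * Real.sqrt c) ≤ w - u := by
        calc (Real.sqrt w - Real.sqrt u) * (2 * Real.sqrt c)
            ≤ (Real.sqrt w - Real.sqrt u) * (Real.sqrt w + Real.sqrt u) :=
              mul_le_mul_of_nonneg_left (by linarith) hnn
          _ = w - u := hprod
      have hwu : w - u ≤ |y - z| := by
        have := abs_max_sub_max_le_abs y z c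
        have h2 : w - u ≤ |w - u| := le_abs_self _
        calc w - u ≤ |w - u| := h2
          _ ≤ |y - z| := this
      rw [le_div_iff₀ (by positivity)]
      linarith
  apply LipschitzWith.of_dist_le_mul
  intro y z
  rw [Real.coe_toNNReal _ (by positivity), Real.dist_eq, Real.dist_eq]
  rw [abs_sub_le_iff]
  constructor
  · calc Real.sqrt (max y c) - Real.sqrt (max z c) ≤ |y - z| / (2 * Real.sqrt c) := key y z
      _ = 1 / (2 * Real.sqrt c) * |y - z| := by ring
  · calc Real.sqrt (max z c) - Real.sqrt (max y c) ≤ |z - y| / (2 * Real.sqrt c) := key z y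
      _ = 1 / (2 * Real.sqrt c) * |y - z| := by rw [abs_sub_comm]; ring

private lemma lip_deriv_bound {K : NNReal} {g : ℝ → ℝ} (hg : LipschitzWith K g) (x : ℝ) :
    |deriv g x| ≤ K := by
  by_cases hd : DifferentiableAt ℝ g x
  · have h := hasDerivAt_iff_tendsto_slope.1 hd.hasDerivAt
    have habs : Filter.Tendsto (fun y => |slope g x y|) (nhdsWithin x {x}ᶜ) (nhds |deriv g x|) :=
      h.abs
    refine le_of_tendsto habs ?_
    filter_upwards [self_mem_nhdsWithin] with y hy
    have hyx : y ≠ x := hy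
    have : |g y - g x| ≤ K * |y - x| := by
      have := hg.dist_le_mul y x
      rwa [Real.dist_eq, Real.dist_eq] at this
    have hne : (0:ℝ) < |y - x| := abs_pos.2 (sub_ne_zero.2 hyx)
    rw [slope_def_field, div_eq_mul_inv, abs_mul, abs_inv, ← div_eq_mul_inv,
      div_le_iff₀ hne]
    exact this
  · rw [deriv_zero_of_not_differentiableAt hd]
    simp

private lemma lip_ftc {K : NNReal} {g : ℝ → ℝ} (hg : LipschitzWith K g) {a b : ℝ} (hab : a ≤ b) :
    ∫ x in Set.Ioc a b, deriv g x = g b - g a := by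
  have gc : Continuous g := hg.continuous
  set h : ℕ → ℝ := fun n => 1 / ((n : ℝ) + 1) with hh
  have hpos : ∀ n, 0 < h n := fun n => by positivity
  have hlim : Tendsto h atTop (nhds 0) := tendsto_one_div_add_atTop_nhds_zero_nat
  set F : ℝ → ℝ := fun u => ∫ x in a..u, g x with hF
  have hFd : ∀ c : ℝ, HasDerivAt F (g c) c := fun c =>
    intervalIntegral.integral_hasDerivAt_right (gc.intervalIntegrable a c)
      (gc.stronglyMeasurableAtFilter volume (nhds c)) gc.continuousAt
  -- convergence of slopes along the sequence
  have hseq : ∀ c : ℝ, Tendsto (fun n => c + h n) atTop (nhdsWithin c {c}ᶜ) := by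
    intro c
    apply tendsto_nhdsWithin_of_tendsto_nhds_of_eventually_within
    · have : Tendsto (fun n => c + h n) atTop (nhds (c + 0)) :=
        tendsto_const_nhds.add hlim
      simpa using this
    · filter_upwards with n
      simp only [Set.mem_compl_iff, Set.mem_singleton_iff]
      have := hpos n; intro hcon; nlinarith [hcon]
  have hslope : ∀ (f : ℝ → ℝ) (f' c : ℝ), HasDerivAt f f' c →
      Tendsto (fun n => (f (c + h n) - f c) / h n) atTop (nhds f') := by
    intro f f' c hf
    have := (hasDerivAt_iff_tendsto_slope.1 hf).comp (hseq c)
    have heq : (fun n => slope f c (c + h n)) = fun n => (f (c + h n) - f c) / h n := by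
      funext n
      rw [slope_def_field]
      congr 1
      ring
    rw [show slope f c ∘ (fun n => c + h n) = fun n => slope f c (c + h n) from rfl] at this
    rwa [heq] at this
  -- the difference quotients
  set q : ℕ → ℝ → ℝ := fun n x => (g (x + h n) - g x) / h n with hq
  have hqint : ∀ n, ∫ x in a..b, q n x
      = (F (b + h n) - F b) / h n - (F (a + h n) - F a) / h n := by
    intro n
    have h1 : ∫ x in a..b, q n x = (∫ x in a..b, (g (x + h n) - g x)) / h n := by
      rw [← intervalIntegral.integral_div]
    have h2 : ∫ x in a..b, (g (x + h n) - g x)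
        = (∫ x in a..b, g (x + h n)) - ∫ x in a..b, g x := by
      apply intervalIntegral.integral_sub
      · exact (gc.comp (continuous_id.add continuous_const)).intervalIntegrable a b
      · exact gc.intervalIntegrable a b
    have h3 : ∫ x in a..b, g (x + h n) = ∫ x in a + h n..b + h n, g x :=
      intervalIntegral.integral_comp_add_right g (h n)
    have h4 : ∫ x in a + h n..b + h n, g x = F (b + h n) - F (a + h n) := by
      rw [hF]
      rw [← intervalIntegral.integral_interval_sub_left (gc.intervalIntegrable a (b + h n))
        (gc.intervalIntegrable a (a + h n))]
    have h5 : F a = 0 := intervalIntegral.integral_same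
    have h6 : (∫ x in a..b, g x) = F b := rfl
    rw [h1, h2, h3, h4, h6, h5]
    ring
  -- limit of the RHS
  have hRHS : Tendsto (fun n => (F (b + h n) - F b) / h n - (F (a + h n) - F a) / h n) atTop
      (nhds (g b - g a)) :=
    (hslope F (g b) b (hFd b)).sub (hslope F (g a) a (hFd a))
  -- dominated convergence
  have hae : ∀ᵐ x : ℝ, DifferentiableAt ℝ g x := hg.ae_differentiableAt_real
  have hconv : ∀ᵐ x ∂(volume.restrict (Set.Ioc a b)),
      Tendsto (fun n => q n x) atTop (nhds (deriv g x)) := by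
    refine ae_restrict_of_ae ?_
    filter_upwards [hae] with x hx
    exact hslope g (deriv g x) x hx.hasDerivAt
  have hbound : ∀ n, ∀ᵐ x ∂(volume.restrict (Set.Ioc a b)), ‖q n x‖ ≤ (K : ℝ) := by
    intro n
    filter_upwards with x
    have hd := hg.dist_le_mul (x + h n) x
    rw [Real.dist_eq, Real.dist_eq, add_sub_cancel_left, abs_of_pos (hpos n)] at hd
    rw [hq, Real.norm_eq_abs, abs_div, abs_of_pos (hpos n), div_le_iff₀ (hpos n)]
    exact hd
  have hDCT : Tendsto (fun n => ∫ x in Set.Ioc a b, q n x) atTop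
      (nhds (∫ x in Set.Ioc a b, deriv g x)) := by
    refine tendsto_integral_of_dominated_convergence (fun _ => (K : ℝ)) ?_ ?_ hbound hconv
    · intro n
      exact ((gc.comp (continuous_id.add continuous_const)).sub gc).div_const (h n)
        |>.aestronglyMeasurable
    · rw [← IntegrableOn]
      exact integrableOn_const measure_Ioc_lt_top.ne
  have hIoc : ∀ n, ∫ x in a..b, q n x = ∫ x in Set.Ioc a b, q n x := fun n =>
    intervalIntegral.integral_of_le hab
  have : Tendsto (fun n => ∫ x in Set.Ioc a b, q n x) atTop (nhds (g b - g a)) := by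
    have := hRHS.congr (fun n => by rw [← hqint n, hIoc n])
    exact this
  exact tendsto_nhds_unique hDCT this

private lemma exists_lipext {v : ℝ → ℝ} (hlip : LocallyLipschitz v) (a b : ℝ) (hab : a ≤ b) :
    ∃ (K : NNReal) (g : ℝ → ℝ), LipschitzWith K g ∧ Set.EqOn v g (Set.Icc a b) := by
  obtain ⟨K, hK⟩ := loclip_icc hlip a b hab
  obtain ⟨g, hg, heq⟩ := hK.extend_real
  exact ⟨K, g, hg, heq⟩

private lemma loclip_ae_diff {v : ℝ → ℝ} (hlip : LocallyLipschitz v) :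
    ∀ᵐ x : ℝ, DifferentiableAt ℝ v x := by
  have H : ∀ n : ℕ, ∀ᵐ x : ℝ, x ∈ Set.Ioo (-(n : ℝ) - 1) ((n : ℝ) + 1) →
      DifferentiableAt ℝ v x := by
    intro n
    obtain ⟨K, g, hg, heq⟩ := exists_lipext hlip (-(n : ℝ) - 1) ((n : ℝ) + 1)
      (by have := Nat.cast_nonneg (α := ℝ) n; linarith)
    filter_upwards [hg.ae_differentiableAt_real] with x hx hmem
    have hveq : v =ᶠ[nhds x] g :=
      Filter.eventuallyEq_of_mem (isOpen_Ioo.mem_nhds hmem)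
        fun r hr => heq (Set.Ioo_subset_Icc_self hr)
    exact hveq.differentiableAt_iff.2 hx
  have := (MeasureTheory.ae_all_iff).2 H
  filter_upwards [this] with x hx
  obtain ⟨n, hn⟩ := exists_nat_ge |x|
  have := abs_le.1 hn
  exact hx n ⟨by linarith [this.1], by linarith [this.2]⟩

/-- deriv v agrees on Icc a b with deriv of an extension, giving FTC and integrability. -/
private lemma loclip_ftc {v : ℝ → ℝ} (hlip : LocallyLipschitz v) {a b : ℝ} (hab : a ≤ b) :
    IntegrableOn (deriv v) (Set.Ioc a b) ∧
      ∫ x in Set.Ioc a b, deriv v x = v b - v a := by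
  obtain ⟨K, g, hg, heq⟩ := exists_lipext hlip (a - 1) (b + 1) (by linarith)
  have hderiv_eq : ∀ x ∈ Set.Icc a b, deriv v x = deriv g x := by
    intro x hx
    have hmem : x ∈ Set.Ioo (a - 1) (b + 1) := ⟨by linarith [hx.1], by linarith [hx.2]⟩
    have hveq : v =ᶠ[nhds x] g :=
      Filter.eventuallyEq_of_mem (isOpen_Ioo.mem_nhds hmem)
        fun r hr => heq (Set.Ioo_subset_Icc_self hr)
    exact hveq.deriv_eq
  constructor
  · refine Integrable.mono' (g := fun _ => (K : ℝ)) ?_ ?_ ?_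
    · rw [← IntegrableOn]
      exact integrableOn_const measure_Ioc_lt_top.ne
    · exact (measurable_deriv v).aestronglyMeasurable
    · filter_upwards [ae_restrict_mem measurableSet_Ioc] with x hx
      rw [Real.norm_eq_abs, hderiv_eq x ⟨hx.1.le, hx.2⟩]
      exact lip_deriv_bound hg x
  · have h1 : ∫ x in Set.Ioc a b, deriv v x = ∫ x in Set.Ioc a b, deriv g x := by
      apply MeasureTheory.setIntegral_congr_fun measurableSet_Ioc
      exact fun x hx => hderiv_eq x ⟨hx.1.le, hx.2⟩
    rw [h1, lip_ftc hg hab, heq ⟨by linarith, by linarith⟩,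
      heq ⟨by linarith, by linarith⟩]

theorem stmt_15 (v : ℝ → ℝ) (N γ : ℝ) (hN : 0 ≤ N) (hγ : 0 < γ)
    (hlip : LocallyLipschitz v)
    (hder : ∀ᵐ t ∂(volume.restrict (Set.Ici (0 : ℝ))),
      N < v t → deriv v t ≤ -γ * Real.sqrt (v t - N)) :
    (∀ t : ℝ, 2 * Real.sqrt (max (v 0 - N) 0) / γ ≤ t → v t ≤ N) ∧
    (∀ s t : ℝ, 0 ≤ s → s ≤ t → v s ≤ N → v t ≤ N) := by
  have hvc : Continuous v := hlip.continuous
  -- forward invariance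
  have inv : ∀ s t : ℝ, 0 ≤ s → s ≤ t → v s ≤ N → v t ≤ N := by
    intro s t hs hst hvs
    set S : Set ℝ := Set.Icc s t ∩ {r | v r ≤ N} with hS
    have hSclosed : IsClosed S :=
      isClosed_Icc.inter (isClosed_le hvc continuous_const)
    have hsS : s ∈ S := ⟨⟨le_rfl, hst⟩, hvs⟩
    have hSbdd : BddAbove S := ⟨t, fun r hr => hr.1.2⟩
    set u := sSup S with hu
    have huS : u ∈ S := hSclosed.csSup_mem ⟨s, hsS⟩ hSbdd
    have hsu : s ≤ u := le_csSup hSbdd hsS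
    have hut : u ≤ t := huS.1.2
    rcases eq_or_lt_of_le hut with heq | hlt
    · rw [← heq]; exact huS.2
    · have hgt : ∀ r ∈ Set.Ioc u t, N < v r := by
        intro r hr
        by_contra hle
        push_neg at hle
        have hrS : r ∈ S := ⟨⟨hsu.trans hr.1.le, hr.2⟩, hle⟩
        have := le_csSup hSbdd hrS
        linarith [hr.1]
      obtain ⟨hint, hftc⟩ := loclip_ftc hlip hut
      have hsub : Set.Ioc u t ⊆ Set.Ici (0 : ℝ) := fun r hr =>
        le_of_lt (lt_of_le_of_lt (hs.trans hsu) hr.1)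
      have hae0 : ∀ᵐ r ∂(volume.restrict (Set.Ioc u t)), deriv v r ≤ 0 := by
        filter_upwards [ae_restrict_of_ae_restrict_of_subset hsub hder,
          ae_restrict_mem measurableSet_Ioc] with r h1 h2
        have hb := h1 (hgt r h2)
        have hsq : 0 ≤ Real.sqrt (v r - N) := Real.sqrt_nonneg _
        nlinarith
      have hnp : ∫ r in Set.Ioc u t, deriv v r ≤ 0 := integral_nonpos_of_ae hae0
      rw [hftc] at hnp
      have hvu : v u ≤ N := huS.2
      linarith
  refine ⟨?_, inv⟩
  intro t ht
  have hτ0 : (0 : ℝ) ≤ 2 * Real.sqrt (max (v 0 - N) 0) / γ := by positivity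
  have ht0 : (0 : ℝ) ≤ t := hτ0.trans ht
  by_cases hv0 : v 0 ≤ N
  · exact inv 0 t le_rfl ht0 hv0
  push_neg at hv0
  by_contra hvt
  push_neg at hvt
  have hall : ∀ r ∈ Set.Icc 0 t, N < v r := by
    intro r hr
    by_contra hle
    push_neg at hle
    exact absurd (inv r t hr.1 hr.2 hle) (not_le.2 hvt)
  obtain ⟨r₀, hr₀, hmin⟩ :=
    isCompact_Icc.exists_isMinOn ⟨0, Set.left_mem_Icc.2 ht0⟩ hvc.continuousOn
  set m := v r₀ - N with hm
  have hm0 : 0 < m := sub_pos.2 (hall r₀ hr₀)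
  set c := m / 2 with hcdef
  have hc : 0 < c := by positivity
  have hvge : ∀ r ∈ Set.Icc 0 t, c < v r - N := by
    intro r hr
    have := isMinOn_iff.1 hmin r hr
    simp only [hcdef]
    linarith
  set G : ℝ → ℝ := fun r => Real.sqrt (max (v r - N) c) with hG
  have hGlip : LocallyLipschitz G := by
    have houter := (sqrt_max_lip hc).locallyLipschitz
    have h1 : LipschitzWith 1 (fun y : ℝ => y - N) :=
      LipschitzWith.of_dist_le_mul fun y z => by
        rw [Real.dist_eq, Real.dist_eq]
        simp [sub_sub_sub_cancel_right]
    have hinner : LocallyLipschitz (fun r => v r - N) := h1.locallyLipschitz.comp hlip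
    exact houter.comp hinner
  set U : Set ℝ := {r | c < v r - N} with hU
  have hUopen : IsOpen U := isOpen_lt continuous_const (hvc.sub continuous_const)
  have haed : ∀ᵐ r ∂(volume.restrict (Set.Ioc 0 t)), deriv G r ≤ -(γ / 2) := by
    have hsub : Set.Ioc 0 t ⊆ Set.Ici (0 : ℝ) := fun r hr => hr.1.le
    filter_upwards [ae_restrict_of_ae_restrict_of_subset hsub hder,
      ae_restrict_of_ae (loclip_ae_diff hlip),
      ae_restrict_mem measurableSet_Ioc] with r hder' hd hr
    have hrIcc : r ∈ Set.Icc 0 t := ⟨hr.1.le, hr.2⟩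
    have hcr : c < v r - N := hvge r hrIcc
    have hNr : N < v r := by linarith
    have hpos : 0 < v r - N := by linarith
    have hsRpos : 0 < Real.sqrt (v r - N) := Real.sqrt_pos.2 hpos
    have hGeq : G =ᶠ[nhds r] fun z => Real.sqrt (v z - N) :=
      Filter.eventuallyEq_of_mem (hUopen.mem_nhds hcr) fun z hz => by
        simp only [hG]
        rw [max_eq_left (le_of_lt hz)]
    have hder2 : HasDerivAt (fun z => Real.sqrt (v z - N))
        (1 / (2 * Real.sqrt (v r - N)) * deriv v r) r := by
      have hv' : HasDerivAt (fun z => v z - N) (deriv v r) r := hd.hasDerivAt.sub_const N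
      have hs' : HasDerivAt Real.sqrt (1 / (2 * Real.sqrt (v r - N))) (v r - N) :=
        Real.hasDerivAt_sqrt (ne_of_gt hpos)
      exact hs'.comp r hv'
    have hGd : deriv G r = 1 / (2 * Real.sqrt (v r - N)) * deriv v r := by
      rw [hGeq.deriv_eq]
      exact hder2.deriv
    rw [hGd]
    have hb := hder' hNr
    have hmul : 1 / (2 * Real.sqrt (v r - N)) * deriv v r
        ≤ 1 / (2 * Real.sqrt (v r - N)) * (-γ * Real.sqrt (v r - N)) :=
      mul_le_mul_of_nonneg_left hb (by positivity)
    have heq2 : 1 / (2 * Real.sqrt (v r - N)) * (-γ * Real.sqrt (v r - N)) = -(γ / 2) := by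
      field_simp
    linarith
  obtain ⟨hint, hftc⟩ := loclip_ftc hGlip ht0
  have hle : ∫ r in Set.Ioc 0 t, deriv G r ≤ ∫ _r in Set.Ioc 0 t, -(γ / 2) := by
    refine setIntegral_mono_ae_restrict hint ?_ haed
    exact integrableOn_const measure_Ioc_lt_top.ne
  have hconst : ∫ _r in Set.Ioc 0 t, -(γ / 2) = t * -(γ / 2) := by
    rw [setIntegral_const, measureReal_def, Real.volume_Ioc, smul_eq_mul, sub_zero, ENNReal.toReal_ofReal ht0]
  rw [hftc, hconst] at hle
  -- unwrap G
  have hGt : G t = Real.sqrt (v t - N) := by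
    simp only [hG]
    rw [max_eq_left (hvge t (Set.right_mem_Icc.2 ht0)).le]
  have hG0 : G 0 = Real.sqrt (v 0 - N) := by
    simp only [hG]
    rw [max_eq_left (hvge 0 (Set.left_mem_Icc.2 ht0)).le]
  have hmax0 : max (v 0 - N) 0 = v 0 - N := max_eq_left (by linarith)
  rw [hmax0] at ht
  set s0 := Real.sqrt (v 0 - N) with hs0
  have hs0pos : 0 < s0 := Real.sqrt_pos.2 (by linarith)
  have h2 : t * -(γ / 2) ≤ (2 * s0 / γ) * -(γ / 2) := by
    have : -(γ / 2) < 0 := by linarith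
    nlinarith
  have h3 : (2 * s0 / γ) * -(γ / 2) = -s0 := by
    field_simp
  have hfinal : Real.sqrt (v t - N) ≤ 0 := by
    rw [hGt, hG0] at hle
    linarith
  have : 0 < Real.sqrt (v t - N) := Real.sqrt_pos.2 (by linarith)
  linarith
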